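/- Let 𝔅 be a basis of the Brauer algebra B_l(εn) = End_G(V^{⊗l}). For 1 ≤ l ≤ r, the set {E_{IJ} ∘ b^J : b ∈ 𝔅, I, J ⊆ {1,...,r}, #I = #J = l} is a basis of B(ε,n,r)_l. -/

import Mathlib

open Finset Matrix

namespace EnhancedBrauer

/- Coordinates: `V = ℂⁿ` with a nondegenerate bilinear form of matrix `Q`; the enhanced space
`V̲ = V ⊕ ℂη` is `ℂ^{n+1}`, the index `Fin.last n` playing the role of `η`.  The enhanced
tensor power `V̲^{⊗r}` is `(Fin r → Fin (n+1)) → ℂ`, and its linear endomorphisms are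
matrices indexed by `Fin r → Fin (n+1)` (acting by `mulVec`/`mulVecLin`).  For
`I ⊆ {1,…,r}`, the summand `V̲_I^{⊗r}` is spanned by the basis indices `k` with
`k i ≠ Fin.last n` exactly for `i ∈ I`. -/

/-- Coordinate matrix of the diagonal action of `g` on the `m`-th tensor power of `ℂ^N`. -/
noncomputable def PhiMat {N m : ℕ} (g : Matrix (Fin N) (Fin N) ℂ) :
    Matrix (Fin m → Fin N) (Fin m → Fin N) ℂ :=
  fun k q => ∏ i, g (k i) (q i)

/-- Coordinate matrix of the place-permutation action of `s ∈ 𝔖_m`. -/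
noncomputable def PsiMat {N m : ℕ} (s : Equiv.Perm (Fin m)) :
    Matrix (Fin m → Fin N) (Fin m → Fin N) ℂ :=
  fun k q => if q = k ∘ s then 1 else 0

/-- The index `k` has support exactly `I` (i.e. the corresponding basis vector of the
enhanced tensor power lies in `V̲_I^{⊗r}`). -/
def isSupp {n r : ℕ} (I : Finset (Fin r)) (k : Fin r → Fin (n + 1)) : Prop :=
  ∀ i, i ∈ I ↔ k i ≠ Fin.last n

/-- The number of tensor factors of the basis index `k` coming from `V` (and not `η`). -/
def levelOf {n r : ℕ} (k : Fin r → Fin (n + 1)) : ℕ :=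
  (Finset.univ.filter fun i => k i ≠ Fin.last n).card

/-- The basis index of `V̲_I^{⊗r}` whose `V`-entries are given by `a : Fin l → Fin n`,
arranged along the increasing enumeration of `I`. -/
noncomputable def emb {n r l : ℕ} (I : Finset (Fin r)) (hI : I.card = l)
    (a : Fin l → Fin n) : Fin r → Fin (n + 1) :=
  fun i => if h : i ∈ I then Fin.castSucc (a ((I.orderIsoOfFin hI).symm ⟨i, h⟩)) else Fin.last n

/-- The operator `σ^I` acting as `σ = A` on `V̲_I^{⊗r} ≅ V^{⊗l}` and as `0` on every other
summand `V̲_K^{⊗r}`. -/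
noncomputable def opMat {n r l : ℕ} (I : Finset (Fin r)) (hI : I.card = l)
    (A : Matrix (Fin l → Fin n) (Fin l → Fin n) ℂ) :
    Matrix (Fin r → Fin (n + 1)) (Fin r → Fin (n + 1)) ℂ :=
  fun k q => ∑ a : Fin l → Fin n, ∑ b : Fin l → Fin n,
    if k = emb I hI a ∧ q = emb I hI b then A a b else 0

/-- The operator `E_{I,J}`: the order-preserving place permutation carrying `V̲_J^{⊗r}`
onto `V̲_I^{⊗r}`, extended by zero on all other summands. -/
noncomputable def EMat {n r l : ℕ} (I J : Finset (Fin r)) (hI : I.card = l)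
    (hJ : J.card = l) :
    Matrix (Fin r → Fin (n + 1)) (Fin r → Fin (n + 1)) ℂ :=
  fun k q => ∑ a : Fin l → Fin n, if k = emb I hI a ∧ q = emb J hJ a then 1 else 0

/-- The Brauer algebra `B_l(εn) = End_G(V^{⊗l})`: all matrices commuting with the diagonal
action of the isometry group `G` of the form with matrix `Q`. -/
def BrauerSet (n l : ℕ) (Q : Matrix (Fin n) (Fin n) ℂ) :
    Set (Matrix (Fin l → Fin n) (Fin l → Fin n) ℂ) :=
  {A | ∀ g : Matrix (Fin n) (Fin n) ℂ, gᵀ * Q * g = Q → PhiMat g * A = A * PhiMat g}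

/-- The restriction `Ψ̲|_l(s)` of the place permutation action to the level-`l` summand
`V̲_l^{⊗r}`, extended by zero on the other levels. -/
noncomputable def PsiLevel {n r : ℕ} (l : ℕ) (s : Equiv.Perm (Fin r)) :
    Matrix (Fin r → Fin (n + 1)) (Fin r → Fin (n + 1)) ℂ :=
  fun k q => if levelOf (n := n) k = l ∧ q = k ∘ s then 1 else 0

/-- The enhanced Brauer algebra `B(ε,n,r)`: the (non-unital) subalgebra of
`End_ℂ(V̲^{⊗r})` generated by `Ψ(𝔖_r)` and all `σ^I` with `σ ∈ B_{#I}(εn)`. -/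
noncomputable def enhancedBrauer (n r : ℕ) (Q : Matrix (Fin n) (Fin n) ℂ) :
    NonUnitalSubalgebra ℂ (Matrix (Fin r → Fin (n + 1)) (Fin r → Fin (n + 1)) ℂ) :=
  NonUnitalAlgebra.adjoin ℂ
    ({M | ∃ s : Equiv.Perm (Fin r), M = PsiMat s} ∪
      {M | ∃ I : Finset (Fin r), ∃ A ∈ BrauerSet n I.card Q, M = opMat I rfl A})

/-- The level-`l` piece `B(ε,n,r)_l`: the (non-unital) subalgebra of `End_ℂ(V̲^{⊗r})`
generated by `Ψ̲|_l(𝔖_r)` and all `σ^I` with `#I = l`, `σ ∈ B_l(εn)`. -/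
noncomputable def enhancedBrauerLevel (n r : ℕ) (Q : Matrix (Fin n) (Fin n) ℂ) (l : ℕ) :
    NonUnitalSubalgebra ℂ (Matrix (Fin r → Fin (n + 1)) (Fin r → Fin (n + 1)) ℂ) :=
  NonUnitalAlgebra.adjoin ℂ
    ({M | ∃ s : Equiv.Perm (Fin r), M = PsiLevel l s} ∪
      {M | ∃ I : Finset (Fin r), ∃ hI : I.card = l, ∃ A ∈ BrauerSet n l Q,
        M = opMat I hI A})

variable {n r l : ℕ}

lemma emb_apply_mem (I : Finset (Fin r)) (hI : I.card = l) (a : Fin l → Fin n)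
    {i : Fin r} (h : i ∈ I) :
    emb I hI a i = Fin.castSucc (a ((I.orderIsoOfFin hI).symm ⟨i, h⟩)) := dif_pos h

lemma emb_apply_not_mem (I : Finset (Fin r)) (hI : I.card = l) (a : Fin l → Fin n)
    {i : Fin r} (h : i ∉ I) : emb I hI a i = Fin.last n := dif_neg h

lemma emb_orderIso (I : Finset (Fin r)) (hI : I.card = l) (a : Fin l → Fin n) (j : Fin l) :
    emb I hI a (I.orderIsoOfFin hI j) = (a j).castSucc := by
  rw [emb_apply_mem I hI a (I.orderIsoOfFin hI j).2]
  congr 1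
  refine congrArg a ?_
  have : (⟨(I.orderIsoOfFin hI j : Fin r), (I.orderIsoOfFin hI j).2⟩ : {x // x ∈ I}) =
      I.orderIsoOfFin hI j := rfl
  rw [this, OrderIso.symm_apply_apply]

lemma emb_ne_last_iff {I : Finset (Fin r)} {hI : I.card = l} {a : Fin l → Fin n} {i : Fin r} :
    emb I hI a i ≠ Fin.last n ↔ i ∈ I := by
  constructor
  · intro h
    by_contra hi
    exact h (emb_apply_not_mem I hI a hi)
  · intro h
    rw [emb_apply_mem I hI a h]
    exact (Fin.castSucc_lt_last _).ne

lemma emb_injective (I : Finset (Fin r)) (hI : I.card = l) :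
    Function.Injective (emb (n := n) I hI) := by
  intro a a' h
  funext j
  have := congrFun h (I.orderIsoOfFin hI j)
  rw [emb_orderIso, emb_orderIso] at this
  exact Fin.castSucc_injective _ this

lemma support_eq {I J : Finset (Fin r)} {hI : I.card = l} {hJ : J.card = l}
    {a c : Fin l → Fin n} (h : emb I hI a = emb J hJ c) : I = J := by
  ext i
  rw [← emb_ne_last_iff (hI := hI) (a := a), ← emb_ne_last_iff (hI := hJ) (a := c), h]

lemma levelOf_emb (I : Finset (Fin r)) (hI : I.card = l) (a : Fin l → Fin n) :
    levelOf (emb I hI a) = l := by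
  unfold levelOf
  rw [show (Finset.univ.filter fun i => emb I hI a i ≠ Fin.last n) = I by
    ext i; simp [emb_ne_last_iff]]
  exact hI

lemma eq_emb_of_supp (k : Fin r → Fin (n + 1)) (I : Finset (Fin r)) (hI : I.card = l)
    (hsupp : ∀ i, i ∈ I ↔ k i ≠ Fin.last n) : ∃ a : Fin l → Fin n, k = emb I hI a := by
  have hne : ∀ j : Fin l, k ((I.orderIsoOfFin hI) j) ≠ Fin.last n := fun j =>
    (hsupp _).mp (I.orderIsoOfFin hI j).2
  refine ⟨fun j => (k ((I.orderIsoOfFin hI) j)).castPred (hne j), ?_⟩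
  funext i
  by_cases hi : i ∈ I
  · rw [emb_apply_mem I hI _ hi, Fin.castSucc_castPred]
    have : ((I.orderIsoOfFin hI) ((I.orderIsoOfFin hI).symm ⟨i, hi⟩) : Fin r) = i := by
      rw [OrderIso.apply_symm_apply]
    rw [this]
  · rw [emb_apply_not_mem I hI _ hi]
    exact not_not.mp (fun hc => hi ((hsupp i).mpr hc))

lemma exists_emb {k : Fin r → Fin (n + 1)} (h : levelOf k = l) :
    ∃ (I : Finset (Fin r)) (hI : I.card = l) (a : Fin l → Fin n), k = emb I hI a := by
  obtain ⟨a, ha⟩ := eq_emb_of_supp k (Finset.univ.filter fun i => k i ≠ Fin.last n) h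
    (fun i => by simp)
  exact ⟨_, h, a, ha⟩


noncomputable def MMat (I J : Finset (Fin r)) (hI : I.card = l) (hJ : J.card = l)
    (B : Matrix (Fin l → Fin n) (Fin l → Fin n) ℂ) :
    Matrix (Fin r → Fin (n + 1)) (Fin r → Fin (n + 1)) ℂ :=
  fun k q => ∑ a : Fin l → Fin n, ∑ c : Fin l → Fin n,
    if k = emb I hI a ∧ q = emb J hJ c then B a c else 0

lemma opMat_eq_MMat (I : Finset (Fin r)) (hI : I.card = l)
    (A : Matrix (Fin l → Fin n) (Fin l → Fin n) ℂ) :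
    opMat I hI A = MMat I I hI hI A := rfl

lemma MMat_apply_emb (I J : Finset (Fin r)) (hI : I.card = l) (hJ : J.card = l)
    (B : Matrix (Fin l → Fin n) (Fin l → Fin n) ℂ) (a : Fin l → Fin n)
    (q : Fin r → Fin (n + 1)) :
    MMat I J hI hJ B (emb I hI a) q = ∑ c, if q = emb J hJ c then B a c else 0 := by
  unfold MMat
  rw [Fintype.sum_eq_single a]
  · refine Finset.sum_congr rfl fun c _ => ?_
    simp
  · intro x hx
    refine Finset.sum_eq_zero fun c _ => if_neg ?_
    rintro ⟨h1, -⟩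
    exact hx (emb_injective I hI h1.symm)

lemma MMat_apply_of_ne (I J : Finset (Fin r)) (hI : I.card = l) (hJ : J.card = l)
    (B : Matrix (Fin l → Fin n) (Fin l → Fin n) ℂ) {k q : Fin r → Fin (n + 1)}
    (h : ∀ a, k ≠ emb I hI a) : MMat I J hI hJ B k q = 0 :=
  Finset.sum_eq_zero fun a _ => Finset.sum_eq_zero fun c _ => if_neg fun hc => h a hc.1

lemma MMat_apply_of_ne_right (I J : Finset (Fin r)) (hI : I.card = l) (hJ : J.card = l)
    (B : Matrix (Fin l → Fin n) (Fin l → Fin n) ℂ) {k q : Fin r → Fin (n + 1)}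
    (h : ∀ c, q ≠ emb J hJ c) : MMat I J hI hJ B k q = 0 :=
  Finset.sum_eq_zero fun a _ => Finset.sum_eq_zero fun c _ => if_neg fun hc => h c hc.2

lemma MMat_apply_emb_emb (I J : Finset (Fin r)) (hI : I.card = l) (hJ : J.card = l)
    (B : Matrix (Fin l → Fin n) (Fin l → Fin n) ℂ) (a c : Fin l → Fin n) :
    MMat I J hI hJ B (emb I hI a) (emb J hJ c) = B a c := by
  rw [MMat_apply_emb, Fintype.sum_eq_single c]
  · simp
  · intro x hx
    exact if_neg fun h1 => hx (emb_injective J hJ h1.symm)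

lemma EMat_apply_emb (I J : Finset (Fin r)) (hI : I.card = l) (hJ : J.card = l)
    (a : Fin l → Fin n) (q : Fin r → Fin (n + 1)) :
    EMat I J hI hJ (emb I hI a) q = if q = emb J hJ a then 1 else 0 := by
  unfold EMat
  rw [Fintype.sum_eq_single a]
  · simp
  · intro x hx
    exact if_neg fun hc => hx (emb_injective I hI hc.1.symm)

lemma EMat_apply_of_ne (I J : Finset (Fin r)) (hI : I.card = l) (hJ : J.card = l)
    {k q : Fin r → Fin (n + 1)} (h : ∀ a, k ≠ emb I hI a) : EMat I J hI hJ k q = 0 :=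
  Finset.sum_eq_zero fun a _ => if_neg fun hc => h a hc.1

lemma EMat_mul_opMat (I J : Finset (Fin r)) (hI : I.card = l) (hJ : J.card = l)
    (B : Matrix (Fin l → Fin n) (Fin l → Fin n) ℂ) :
    EMat I J hI hJ * opMat J hJ B = MMat I J hI hJ B := by
  ext k q
  rw [Matrix.mul_apply]
  by_cases hk : ∃ a, k = emb I hI a
  · obtain ⟨a, rfl⟩ := hk
    rw [MMat_apply_emb]
    calc ∑ p, EMat I J hI hJ (emb I hI a) p * opMat J hJ B p q
        = ∑ p, (if p = emb J hJ a then (1 : ℂ) else 0) * opMat J hJ B p q := by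
          simp only [EMat_apply_emb]
      _ = opMat J hJ B (emb J hJ a) q := by
          simp [ite_mul, Finset.sum_ite_eq']
      _ = ∑ c, if q = emb J hJ c then B a c else 0 := by
          rw [opMat_eq_MMat, MMat_apply_emb]
  · push_neg at hk
    rw [MMat_apply_of_ne I J hI hJ B hk]
    exact Finset.sum_eq_zero fun p _ => by
      rw [EMat_apply_of_ne I J hI hJ hk, zero_mul]

lemma MMat_mul_MMat (I J K L : Finset (Fin r)) (hI : I.card = l) (hJ : J.card = l)
    (hK : K.card = l) (hL : L.card = l)
    (B B' : Matrix (Fin l → Fin n) (Fin l → Fin n) ℂ) :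
    MMat I J hI hJ B * MMat K L hK hL B' =
      if J = K then MMat I L hI hL (B * B') else 0 := by
  ext k q
  rw [Matrix.mul_apply]
  by_cases hk : ∃ a, k = emb I hI a
  · obtain ⟨a, rfl⟩ := hk
    have step : ∑ p, MMat I J hI hJ B (emb I hI a) p * MMat K L hK hL B' p q
        = ∑ c, B a c * MMat K L hK hL B' (emb J hJ c) q := by
      calc ∑ p, MMat I J hI hJ B (emb I hI a) p * MMat K L hK hL B' p q
          = ∑ p, ∑ c, (if p = emb J hJ c then B a c else 0) * MMat K L hK hL B' p q := by
            simp only [MMat_apply_emb, Finset.sum_mul]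
        _ = ∑ c, ∑ p, if p = emb J hJ c then B a c * MMat K L hK hL B' p q else 0 := by
            rw [Finset.sum_comm]
            simp [ite_mul]
        _ = ∑ c, B a c * MMat K L hK hL B' (emb J hJ c) q := by
            simp [Finset.sum_ite_eq']
    rw [step]
    by_cases hJK : J = K
    · subst hJK
      rw [if_pos rfl]
      calc ∑ c, B a c * MMat J L hK hL B' (emb J hJ c) q
          = ∑ c, B a c * ∑ e, if q = emb L hL e then B' c e else 0 := by
            simp only [MMat_apply_emb]
        _ = ∑ c, ∑ e, if q = emb L hL e then B a c * B' c e else 0 := by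
            refine Finset.sum_congr rfl fun c _ => ?_
            rw [Finset.mul_sum]
            refine Finset.sum_congr rfl fun e _ => ?_
            split_ifs with h <;> simp
        _ = ∑ e, (if q = emb L hL e then ∑ c, B a c * B' c e else 0) := by
            rw [Finset.sum_comm]
            refine Finset.sum_congr rfl fun e _ => ?_
            split_ifs with h <;> simp
        _ = MMat I L hI hL (B * B') (emb I hI a) q := by
            rw [MMat_apply_emb]
            refine Finset.sum_congr rfl fun e _ => ?_
            split_ifs with h
            · rw [Matrix.mul_apply]
            · rfl
    · rw [if_neg hJK]
      rw [Matrix.zero_apply]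
      refine Finset.sum_eq_zero fun c _ => ?_
      rw [MMat_apply_of_ne K L hK hL B' (fun d hd => hJK (support_eq hd)), mul_zero]
  · push_neg at hk
    rw [show (∑ p, MMat I J hI hJ B k p * MMat K L hK hL B' p q) = 0 from
      Finset.sum_eq_zero fun p _ => by rw [MMat_apply_of_ne I J hI hJ B hk, zero_mul]]
    split_ifs with h
    · rw [MMat_apply_of_ne I L hI hL _ hk]
    · rw [Matrix.zero_apply]

lemma MMat_apply_grid (I' J' : Finset (Fin r)) (hI' : I'.card = l) (hJ' : J'.card = l)
    (X : Matrix (Fin l → Fin n) (Fin l → Fin n) ℂ)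
    (I J : Finset (Fin r)) (hI : I.card = l) (hJ : J.card = l) (a c : Fin l → Fin n) :
    MMat I' J' hI' hJ' X (emb I hI a) (emb J hJ c) =
      if I' = I ∧ J' = J then X a c else 0 := by
  split_ifs with h
  · obtain ⟨rfl, rfl⟩ := h
    exact MMat_apply_emb_emb I' J' hI' hJ' X a c
  · rcases not_and_or.mp h with h1 | h1
    · exact MMat_apply_of_ne _ _ _ _ _ fun a' ha' => h1 (support_eq ha').symm
    · exact MMat_apply_of_ne_right _ _ _ _ _ fun c' hc' => h1 (support_eq hc').symm

noncomputable def MMatLin (I J : Finset (Fin r)) (hI : I.card = l) (hJ : J.card = l) :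
    Matrix (Fin l → Fin n) (Fin l → Fin n) ℂ →ₗ[ℂ]
      Matrix (Fin r → Fin (n + 1)) (Fin r → Fin (n + 1)) ℂ where
  toFun := MMat I J hI hJ
  map_add' B C := by
    ext k q
    rw [Matrix.add_apply]
    unfold MMat
    rw [← Finset.sum_add_distrib]
    refine Finset.sum_congr rfl fun a _ => ?_
    rw [← Finset.sum_add_distrib]
    refine Finset.sum_congr rfl fun c _ => ?_
    split_ifs with h
    · rw [Matrix.add_apply]
    · rw [add_zero]
  map_smul' t B := by
    ext k q
    rw [Matrix.smul_apply]
    unfold MMat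
    simp only [RingHom.id_apply, Matrix.smul_apply, smul_eq_mul, Finset.mul_sum]
    refine Finset.sum_congr rfl fun a _ => Finset.sum_congr rfl fun c _ => ?_
    split_ifs with h
    · rfl
    · rw [mul_zero]


lemma comp_eq_iff {m : ℕ} {α : Type*} (s : Equiv.Perm (Fin m)) (k v : Fin m → α) :
    k ∘ ⇑s = v ↔ k = v ∘ ⇑s⁻¹ := by
  constructor
  · rintro rfl; funext i; simp
  · rintro rfl; funext i; simp

lemma psiMat_mem_brauerSet (τ : Equiv.Perm (Fin l)) (Q : Matrix (Fin n) (Fin n) ℂ) :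
    PsiMat (N := n) τ ∈ BrauerSet n l Q := by
  intro g _
  ext k q
  rw [Matrix.mul_apply, Matrix.mul_apply]
  unfold PhiMat PsiMat
  have h1 : ∀ p : Fin l → Fin n, (q = p ∘ ⇑τ) ↔ (p = q ∘ ⇑τ⁻¹) := by
    intro p
    constructor
    · rintro rfl; funext i; simp
    · rintro rfl; funext i; simp
  simp only [h1]
  rw [show (∑ p : Fin l → Fin n, (∏ i, g (k i) (p i)) * if p = q ∘ ⇑τ⁻¹ then (1:ℂ) else 0)
      = ∏ i, g (k i) (q (τ⁻¹ i)) by simp [mul_ite, Finset.sum_ite_eq']]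
  rw [show (∑ p : Fin l → Fin n, (if p = k ∘ ⇑τ then (1:ℂ) else 0) * ∏ i, g (p i) (q i))
      = ∏ i, g (k (τ i)) (q i) by simp [ite_mul, Finset.sum_ite_eq']]
  rw [← Equiv.prod_comp τ (fun i => g (k i) (q (τ⁻¹ i)))]
  simp

lemma brauerSet_mul {Q : Matrix (Fin n) (Fin n) ℂ}
    {A B : Matrix (Fin l → Fin n) (Fin l → Fin n) ℂ}
    (hA : A ∈ BrauerSet n l Q) (hB : B ∈ BrauerSet n l Q) : A * B ∈ BrauerSet n l Q := by
  intro g hg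
  rw [← mul_assoc, hA g hg, mul_assoc, hB g hg, mul_assoc]

lemma psiLevel_mul_apply (s : Equiv.Perm (Fin r))
    (X : Matrix (Fin r → Fin (n + 1)) (Fin r → Fin (n + 1)) ℂ)
    (k q : Fin r → Fin (n + 1)) :
    (PsiLevel (n := n) l s * X) k q = if levelOf (n := n) k = l then X (k ∘ ⇑s) q else 0 := by
  rw [Matrix.mul_apply]
  unfold PsiLevel
  by_cases h : levelOf (n := n) k = l
  · simp [h, ite_mul, Finset.sum_ite_eq']
  · simp [h]

lemma card_image_inv (s : Equiv.Perm (Fin r)) (I : Finset (Fin r)) (hI : I.card = l) :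
    (I.image ⇑s⁻¹).card = l := by
  rw [Finset.card_image_of_injective _ (Equiv.injective _)]; exact hI

lemma mem_image_inv (s : Equiv.Perm (Fin r)) (I : Finset (Fin r)) (x : Fin r) :
    x ∈ I.image ⇑s⁻¹ ↔ s x ∈ I := by
  simp only [Finset.mem_image]
  constructor
  · rintro ⟨y, hy, rfl⟩; simpa
  · intro h; exact ⟨s x, h, by simp⟩

noncomputable def tau (s : Equiv.Perm (Fin r)) (I : Finset (Fin r)) (hI : I.card = l) :
    Equiv.Perm (Fin l) :=
  ((I.image ⇑s⁻¹).orderIsoOfFin (card_image_inv s I hI)).toEquiv.trans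
    ((Equiv.subtypeEquiv s (fun x => mem_image_inv s I x)).trans
      (I.orderIsoOfFin hI).toEquiv.symm)

lemma emb_comp (s : Equiv.Perm (Fin r)) (I : Finset (Fin r)) (hI : I.card = l)
    (a : Fin l → Fin n) :
    emb I hI a ∘ ⇑s = emb (I.image ⇑s⁻¹) (card_image_inv s I hI) (a ∘ ⇑(tau s I hI)) := by
  funext j
  by_cases hj : j ∈ I.image ⇑s⁻¹
  · have hsj : s j ∈ I := (mem_image_inv s I j).mp hj
    rw [Function.comp_apply, emb_apply_mem I hI a hsj, emb_apply_mem _ _ _ hj]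
    congr 1
    show a _ = a (tau s I hI _)
    congr 1
    unfold tau
    simp only [Equiv.trans_apply, Equiv.subtypeEquiv_apply]
    have key : (((I.image ⇑s⁻¹).orderIsoOfFin (card_image_inv s I hI)).toEquiv
        ((((I.image ⇑s⁻¹).orderIsoOfFin (card_image_inv s I hI)).symm) ⟨j, hj⟩))
        = ⟨j, hj⟩ :=
      Equiv.apply_symm_apply ((I.image ⇑s⁻¹).orderIsoOfFin (card_image_inv s I hI)).toEquiv _
    rw [key]
    rfl
  · have hsj : s j ∉ I := fun h => hj ((mem_image_inv s I j).mpr h)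
    rw [Function.comp_apply, emb_apply_not_mem I hI a hsj, emb_apply_not_mem _ _ _ hj]


lemma psiLevel_eq_sum (s : Equiv.Perm (Fin r)) :
    PsiLevel (n := n) l s = ∑ I : {I : Finset (Fin r) // I.card = l},
      MMat I.1 (I.1.image ⇑s⁻¹) I.2 (card_image_inv s I.1 I.2) (PsiMat (tau s I.1 I.2)) := by
  ext k q
  rw [Matrix.sum_apply]
  by_cases h : levelOf (n := n) k = l
  · obtain ⟨I₀, hI₀, a₀, rfl⟩ := exists_emb h
    rw [Fintype.sum_eq_single (⟨I₀, hI₀⟩ : {I : Finset (Fin r) // I.card = l})]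
    · show PsiLevel (n := n) l s _ q = MMat I₀ (I₀.image ⇑s⁻¹) hI₀ _ (PsiMat (tau s I₀ hI₀)) _ q
      rw [MMat_apply_emb]
      rw [show (∑ c, if q = emb (I₀.image ⇑s⁻¹) (card_image_inv s I₀ hI₀) c
            then PsiMat (N := n) (tau s I₀ hI₀) a₀ c else 0)
          = if q = emb (I₀.image ⇑s⁻¹) (card_image_inv s I₀ hI₀) (a₀ ∘ ⇑(tau s I₀ hI₀))
            then 1 else 0 by
        rw [Fintype.sum_eq_single (a₀ ∘ ⇑(tau s I₀ hI₀))]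
        · simp [PsiMat]
        · intro c hc
          simp [PsiMat, hc]]
      rw [← emb_comp]
      unfold PsiLevel
      rw [levelOf_emb I₀ hI₀ a₀]
      simp
    · intro I hne
      refine MMat_apply_of_ne _ _ _ _ _ fun a ha => hne ?_
      have : I₀ = I.1 := support_eq ha
      exact Subtype.ext this.symm
  · rw [show PsiLevel (n := n) l s k q = 0 by simp [PsiLevel, h]]
    exact (Finset.sum_eq_zero fun I _ => MMat_apply_of_ne _ _ _ _ _ fun a ha =>
      h (by rw [ha]; exact levelOf_emb I.1 I.2 a)).symm

noncomputable def permOf (I J : Finset (Fin r)) (hI : I.card = l) (hJ : J.card = l) :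
    Equiv.Perm (Fin r) :=
  Equiv.extendSubtype ((J.orderIsoOfFin hJ).toEquiv.symm.trans (I.orderIsoOfFin hI).toEquiv)

lemma emb_comp_permOf (I J : Finset (Fin r)) (hI : I.card = l) (hJ : J.card = l)
    (a : Fin l → Fin n) :
    emb J hJ a ∘ ⇑(permOf I J hI hJ)⁻¹ = emb I hI a := by
  funext i
  by_cases hi : i ∈ I
  · have hx : ((J.orderIsoOfFin hJ) ((I.orderIsoOfFin hI).symm ⟨i, hi⟩) : Fin r) ∈ J :=
      ((J.orderIsoOfFin hJ) ((I.orderIsoOfFin hI).symm ⟨i, hi⟩)).2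
    have hfwd : permOf I J hI hJ
        ((J.orderIsoOfFin hJ) ((I.orderIsoOfFin hI).symm ⟨i, hi⟩) : Fin r) = i := by
      unfold permOf
      rw [Equiv.extendSubtype_apply_of_mem _ _ hx]
      show ((I.orderIsoOfFin hI).toEquiv ((J.orderIsoOfFin hJ).toEquiv.symm ⟨_, hx⟩) : Fin r) = i
      have h2 : ((J.orderIsoOfFin hJ).toEquiv.symm ⟨_, hx⟩ : Fin l)
          = (I.orderIsoOfFin hI).symm ⟨i, hi⟩ := by
        rw [Equiv.symm_apply_eq]
        exact Subtype.ext rfl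
      rw [h2]
      show ((I.orderIsoOfFin hI) ((I.orderIsoOfFin hI).symm ⟨i, hi⟩) : Fin r) = i
      rw [OrderIso.apply_symm_apply]
    have hinv : (permOf I J hI hJ)⁻¹ i
        = ((J.orderIsoOfFin hJ) ((I.orderIsoOfFin hI).symm ⟨i, hi⟩) : Fin r) := by
      rw [Equiv.Perm.inv_eq_iff_eq]
      exact hfwd.symm
    rw [Function.comp_apply, hinv, emb_apply_mem J hJ a hx, emb_apply_mem I hI a hi]
    congr 1
    congr 1
    rw [show (⟨_, hx⟩ : {x // x ∈ J})
        = (J.orderIsoOfFin hJ) ((I.orderIsoOfFin hI).symm ⟨i, hi⟩) from Subtype.ext rfl,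
      OrderIso.symm_apply_apply]
  · have hni : (permOf I J hI hJ)⁻¹ i ∉ J := by
      intro hmem
      apply hi
      have hmm := Equiv.extendSubtype_mem
        ((J.orderIsoOfFin hJ).toEquiv.symm.trans (I.orderIsoOfFin hI).toEquiv) _ hmem
      have : permOf I J hI hJ ((permOf I J hI hJ)⁻¹ i) ∈ I := hmm
      simpa using this
    rw [Function.comp_apply, emb_apply_not_mem J hJ a hni, emb_apply_not_mem I hI a hi]

lemma MMat_eq_psiLevel_mul (I J : Finset (Fin r)) (hI : I.card = l) (hJ : J.card = l)
    (B : Matrix (Fin l → Fin n) (Fin l → Fin n) ℂ) :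
    MMat I J hI hJ B = PsiLevel (n := n) l (permOf I J hI hJ) * opMat J hJ B := by
  ext k q
  rw [psiLevel_mul_apply]
  by_cases h : levelOf (n := n) k = l
  · rw [if_pos h]
    rw [opMat_eq_MMat]
    unfold MMat
    refine Finset.sum_congr rfl fun a _ => Finset.sum_congr rfl fun c _ => ?_
    refine if_congr (and_congr_left' ?_) rfl rfl
    rw [comp_eq_iff, emb_comp_permOf]
  · rw [if_neg h]
    exact MMat_apply_of_ne I J hI hJ B fun a ha => h (by rw [ha]; exact levelOf_emb I hI a)


lemma MMatLin_apply (I J : Finset (Fin r)) (hI : I.card = l) (hJ : J.card = l)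
    (B : Matrix (Fin l → Fin n) (Fin l → Fin n) ℂ) :
    MMatLin I J hI hJ B = MMat I J hI hJ B := rfl

/-- Let `𝔅 = (b i)_{i : ι}` be a basis of the Brauer algebra
`B_l(εn) = End_G(V^{⊗l})`.  For `1 ≤ l ≤ r`, the family
`E_{IJ} ∘ b^J` (`b ∈ 𝔅`, `I, J ⊆ {1,…,r}`, `#I = #J = l`) is a basis of `B(ε,n,r)_l`:
it is linearly independent and spans `B(ε,n,r)_l`. -/
theorem enhancedBrauerLevel_basis {n r l : ℕ} (hl : 1 ≤ l) (hlr : l ≤ r)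
    (Q : Matrix (Fin n) (Fin n) ℂ) {ι : Type*}
    (b : ι → Matrix (Fin l → Fin n) (Fin l → Fin n) ℂ)
    (hb_indep : LinearIndependent ℂ b)
    (hb_mem : ∀ i, b i ∈ BrauerSet n l Q)
    (hb_span : ∀ A ∈ BrauerSet n l Q, A ∈ Submodule.span ℂ (Set.range b)) :
    let fam : ι × {I : Finset (Fin r) // I.card = l} × {J : Finset (Fin r) // J.card = l} →
        Matrix (Fin r → Fin (n + 1)) (Fin r → Fin (n + 1)) ℂ :=
      fun p => EMat p.2.1.1 p.2.2.1 p.2.1.2 p.2.2.2 * opMat p.2.2.1 p.2.2.2 (b p.1)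
    LinearIndependent ℂ fam ∧
      Submodule.span ℂ (Set.range fam) = (enhancedBrauerLevel n r Q l).toSubmodule := by
  intro fam
  classical
  have hfam : ∀ p : ι × {I : Finset (Fin r) // I.card = l} × {J : Finset (Fin r) // J.card = l},
      fam p = MMat p.2.1.1 p.2.2.1 p.2.1.2 p.2.2.2 (b p.1) := fun p =>
    EMat_mul_opMat p.2.1.1 p.2.2.1 p.2.1.2 p.2.2.2 (b p.1)
  have hspan : ∀ (I J : Finset (Fin r)) (hI : I.card = l) (hJ : J.card = l)
      (A : Matrix (Fin l → Fin n) (Fin l → Fin n) ℂ), A ∈ Submodule.span ℂ (Set.range b) →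
      MMat I J hI hJ A ∈ Submodule.span ℂ (Set.range fam) := by
    intro I J hI hJ A hA
    have h1 : MMatLin (n := n) I J hI hJ A ∈
        Submodule.map (MMatLin (n := n) I J hI hJ) (Submodule.span ℂ (Set.range b)) :=
      Submodule.mem_map_of_mem hA
    rw [Submodule.map_span] at h1
    refine Submodule.span_mono ?_ h1
    rintro _ ⟨_, ⟨i, rfl⟩, rfl⟩
    rw [MMatLin_apply]
    refine ⟨(i, ⟨I, hI⟩, ⟨J, hJ⟩), ?_⟩
    rw [hfam]
  constructor
  · rw [linearIndependent_iff']
    intro s g hsum p hp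
    obtain ⟨i₀, ⟨I, hI⟩, ⟨J, hJ⟩⟩ := p
    have key : ∑ p ∈ s.filter (fun p => p.2.1.1 = I ∧ p.2.2.1 = J), g p • b p.1 = 0 := by
      ext a c
      have h1 := congrFun (congrFun hsum (emb I hI a)) (emb J hJ c)
      simp only [Matrix.sum_apply, Matrix.smul_apply, smul_eq_mul, Matrix.zero_apply] at h1
      have h2 : ∀ p ∈ s, g p * fam p (emb I hI a) (emb J hJ c)
          = if p.2.1.1 = I ∧ p.2.2.1 = J then g p * b p.1 a c else 0 := by
        intro p _
        rw [hfam, MMat_apply_grid]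
        split_ifs <;> simp
      rw [Finset.sum_congr rfl h2, ← Finset.sum_filter] at h1
      simpa [Matrix.sum_apply, smul_eq_mul] using h1
    have hinj : ∀ p ∈ s.filter (fun p => p.2.1.1 = I ∧ p.2.2.1 = J),
        ∀ q ∈ s.filter (fun p => p.2.1.1 = I ∧ p.2.2.1 = J), p.1 = q.1 → p = q := by
      intro p hp' q hq' h
      have hp2 := (Finset.mem_filter.mp hp').2
      have hq2 := (Finset.mem_filter.mp hq').2
      refine Prod.ext h (Prod.ext ?_ ?_)
      · exact Subtype.ext (hp2.1.trans hq2.1.symm)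
      · exact Subtype.ext (hp2.2.trans hq2.2.symm)
    have hfin := linearIndependent_iff'.mp hb_indep
      ((s.filter (fun p => p.2.1.1 = I ∧ p.2.2.1 = J)).image Prod.fst)
      (fun i => g (i, ⟨I, hI⟩, ⟨J, hJ⟩)) ?_ i₀ ?_
    · exact hfin
    · rw [Finset.sum_image hinj]
      refine (Finset.sum_congr rfl fun p hp' => ?_).trans key
      obtain ⟨pi, ⟨PI, hPI⟩, ⟨PJ, hPJ⟩⟩ := p
      obtain ⟨h1, h2⟩ := (Finset.mem_filter.mp hp').2
      dsimp only at h1 h2 ⊢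
      subst h1
      subst h2
      rfl
    · exact Finset.mem_image_of_mem Prod.fst (Finset.mem_filter.mpr ⟨hp, rfl, rfl⟩)
  · have hmul' : ∀ x y, x ∈ Submodule.span ℂ (Set.range fam) →
        y ∈ Submodule.span ℂ (Set.range fam) →
        x * y ∈ Submodule.span ℂ (Set.range fam) := by
      intro x y hx hy
      refine Submodule.span_induction₂ (p := fun x y _ _ =>
        x * y ∈ Submodule.span ℂ (Set.range fam)) ?_ ?_ ?_ ?_ ?_ ?_ ?_ hx hy
      · rintro _ _ ⟨p, rfl⟩ ⟨p', rfl⟩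
        obtain ⟨i, ⟨I, hI⟩, ⟨J, hJ⟩⟩ := p
        obtain ⟨i', ⟨K, hK⟩, ⟨L, hL⟩⟩ := p'
        rw [hfam, hfam, MMat_mul_MMat]
        split_ifs with h
        · exact hspan _ _ _ _ _ (hb_span _ (brauerSet_mul (hb_mem i) (hb_mem i')))
        · exact Submodule.zero_mem _
      · intro y hy; rw [zero_mul]; exact Submodule.zero_mem _
      · intro x hx; rw [mul_zero]; exact Submodule.zero_mem _
      · intro x y z hx hy hz h1 h2; rw [add_mul]; exact Submodule.add_mem _ h1 h2
      · intro x y z hx hy hz h1 h2; rw [mul_add]; exact Submodule.add_mem _ h1 h2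
      · intro t x y hx hy h1; rw [smul_mul_assoc]; exact Submodule.smul_mem _ _ h1
      · intro t x y hx hy h1; rw [mul_smul_comm]; exact Submodule.smul_mem _ _ h1
    apply le_antisymm
    · rw [Submodule.span_le]
      rintro _ ⟨p, rfl⟩
      rw [SetLike.mem_coe, NonUnitalSubalgebra.mem_toSubmodule]
      obtain ⟨i, ⟨I, hI⟩, ⟨J, hJ⟩⟩ := p
      rw [hfam, MMat_eq_psiLevel_mul]
      exact mul_mem
        (NonUnitalAlgebra.subset_adjoin ℂ (Or.inl ⟨permOf I J hI hJ, rfl⟩))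
        (NonUnitalAlgebra.subset_adjoin ℂ (Or.inr ⟨J, hJ, b i, hb_mem i, rfl⟩))
    · have hle : enhancedBrauerLevel n r Q l ≤
          (Submodule.span ℂ (Set.range fam)).toNonUnitalSubalgebra hmul' := by
        apply NonUnitalAlgebra.adjoin_le
        rintro x (⟨s, rfl⟩ | ⟨I, hI', A, hA, rfl⟩)
        · rw [SetLike.mem_coe, Submodule.mem_toNonUnitalSubalgebra]
          rw [psiLevel_eq_sum]
          exact Submodule.sum_mem _ fun I _ =>
            hspan _ _ _ _ _ (hb_span _ (psiMat_mem_brauerSet (tau s I.1 I.2) Q))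
        · rw [SetLike.mem_coe, Submodule.mem_toNonUnitalSubalgebra]
          rw [opMat_eq_MMat]
          exact hspan _ _ _ _ _ (hb_span A hA)
      intro x hx
      exact (Submodule.mem_toNonUnitalSubalgebra (h_mul := hmul')).mp
        (hle ((NonUnitalSubalgebra.mem_toSubmodule _).mp hx))

end EnhancedBrauer
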